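/- The following identity holds in Ω²: w³ ω² = −(q⁸/(q⁴ + 1)) z (ω̄ ω + q⁴ ω ω̄). -/

import Mathlib

private lemma lc1 {M : Type*} [AddCommGroup M] [Module ℂ M] {gl gr l r : M} (c : ℂ)
    (h : l = r) (key : gl - gr = c • (l - r)) : gl = gr := by
  simp only [h, sub_self, smul_zero] at key; exact sub_eq_zero.mp key

private lemma lc2 {M : Type*} [AddCommGroup M] [Module ℂ M] {gl gr l1 r1 l2 r2 : M} (c1 c2 : ℂ)
    (h1 : l1 = r1) (h2 : l2 = r2)
    (key : gl - gr = c1 • (l1 - r1) + c2 • (l2 - r2)) : gl = gr := by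
  simp only [h1, h2, sub_self, smul_zero, add_zero] at key; exact sub_eq_zero.mp key

set_option maxHeartbeats 2000000 in
theorem w_cubed_omega_sq
    (q : ℝ) (hq0 : 0 < q) (hq1 : q < 1)
    {A : Type*} [Ring A] [Algebra ℂ A]
    (z w : A)
    (hzw : w * z - ((q : ℂ) ^ 2) • (z * w) = ((1 : ℂ) - (q : ℂ) ^ 2) • (1 : A))
    (x : A) (hx : x = 1 - z * w)
    (σ : A ≃ₐ[ℂ] A) (hσz : σ z = ((q : ℂ) ^ 2) • z)
    (hσw : σ w = (((q : ℂ) ^ 2)⁻¹) • w)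
    (D : A →ₗ[ℂ] A)
    (hD : ∀ a b : A, D (a * b) = D a * σ b + a * D b)
    (hDz : D z = w) (hDw : D w = 0)
    (Db : A →ₗ[ℂ] A)
    (hDb : ∀ a b : A, Db (a * b) = Db a * σ b + a * Db b)
    (hDbz : Db z = 0) (hDbw : Db w = ((q : ℂ) ^ 2) • z)
    {Ω : Type*} [Ring Ω] [Algebra ℂ Ω]
    (𝒜 : ℕ → Submodule ℂ Ω)
    (hmul : ∀ {m n : ℕ} {ξ η : Ω}, ξ ∈ 𝒜 m → η ∈ 𝒜 n → ξ * η ∈ 𝒜 (m + n))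
    (ι : A →ₐ[ℂ] Ω) (hι : Function.Injective ι)
    (hι0 : ∀ a : A, ι a ∈ 𝒜 0) (hι0' : ∀ u ∈ 𝒜 0, ∃ a : A, ι a = u)
    (d : Ω →ₗ[ℂ] Ω)
    (hdeg : ∀ {n : ℕ} {ξ : Ω}, ξ ∈ 𝒜 n → d ξ ∈ 𝒜 (n + 1))
    (hdd : ∀ ξ : Ω, d (d ξ) = 0)
    (hLeib : ∀ {n : ℕ} {ξ : Ω}, ξ ∈ 𝒜 n → ∀ η : Ω,
      d (ξ * η) = d ξ * η + ((-1 : ℂ) ^ n) • (ξ * d η))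
    (ω ωb : Ω) (hω : ω ∈ 𝒜 1) (hωb : ωb ∈ 𝒜 1)
    (hωcomm : ∀ a : A, ω * ι a = ι (σ a) * ω)
    (hωbcomm : ∀ a : A, ωb * ι a = ι (σ a) * ωb)
    (hda : ∀ a : A, d (ι a) = ι (D a) * ω + ι (Db a) * ωb)
    :
    ι (w ^ 3) * ω ^ 2 =
      (-((q : ℂ) ^ 8 / ((q : ℂ) ^ 4 + 1))) • (ι z * (ωb * ω + ((q : ℂ) ^ 4) • (ω * ωb))) := by
  set Q : ℂ := (q : ℂ) ^ 2 with hQdef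
  have hq' : (q : ℂ) ≠ 0 := by exact_mod_cast hq0.ne'
  have hQ0 : Q ≠ 0 := pow_ne_zero _ hq'
  have hQr : Q = ((q ^ 2 : ℝ) : ℂ) := by push_cast [hQdef]; ring
  have h1Q : (1 : ℂ) - Q ≠ 0 := by
    rw [hQr, sub_ne_zero]
    intro h
    have : (1 : ℝ) = q ^ 2 := by exact_mod_cast h
    nlinarith
  have hQ21 : Q ^ 2 + 1 ≠ 0 := by
    rw [hQr]
    intro h
    have : (q ^ 2 : ℝ) ^ 2 + 1 = 0 := by exact_mod_cast h
    nlinarith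
  have hq41 : ((q : ℂ) ^ 4) + 1 ≠ 0 := by
    intro h
    have : (q ^ 4 : ℝ) + 1 = 0 := by exact_mod_cast h
    nlinarith
  -- basic A-level facts
  have hwz : w * z = Q • (z * w) + (1 - Q) • (1 : A) := by
    have := sub_eq_iff_eq_add.mp hzw; rw [this]; module
  have hwzr : ∀ v : A, w * (z * v) = Q • (z * (w * v)) + (1 - Q) • v := by
    intro v
    calc w * (z * v) = (w * z) * v := by rw [mul_assoc]
    _ = Q • (z * (w * v)) + (1 - Q) • v := by
        rw [hwz, add_mul, smul_mul_assoc, smul_mul_assoc, one_mul, mul_assoc]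
  have hσ1 : σ (1 : A) = 1 := map_one σ
  have hD1 : D 1 = 0 := by
    have h := hD 1 1
    rw [mul_one, hσ1, mul_one, one_mul] at h
    exact (right_eq_add.mp h)
  have hDb1 : Db 1 = 0 := by
    have h := hDb 1 1
    rw [mul_one, hσ1, mul_one, one_mul] at h
    exact (right_eq_add.mp h)
  -- D/Db of composites
  have hDz2 : D (z * z) = (Q ^ 2 + 1) • (z * w) + (Q - Q ^ 2) • (1 : A) := by
    rw [hD z z, hDz, hσz, mul_smul_comm, hwz]; module
  have hDbz2 : Db (z * z) = 0 := by
    simp only [hDb z z, hDbz, zero_mul, mul_zero, add_zero]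
  have hDzw : D (z * w) = Q⁻¹ • (w * w) := by
    rw [hD z w, hDz, hDw, hσw, mul_zero, add_zero, mul_smul_comm]
  have hDbzw : Db (z * w) = Q • (z * z) := by
    rw [hDb z w, hDbz, hDbw, zero_mul, zero_add, mul_smul_comm]
  have hDw2 : D (w * w) = 0 := by
    simp only [hD w w, hDw, zero_mul, mul_zero, add_zero]
  have hDbw2 : Db (w * w) = (Q ^ 2 + 1) • (z * w) + (Q - Q ^ 2) • (1 : A) := by
    rw [hDb w w, hDbw, hσw]
    simp only [smul_mul_assoc, mul_smul_comm, smul_smul]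
    rw [inv_mul_cancel₀ hQ0, one_smul, hwz]
    module
  have hDzw2 : D (z * (w * w)) = (Q⁻¹ * Q⁻¹) • (w * (w * w)) := by
    rw [hD z (w * w), hDz, hDw2, mul_zero, add_zero, map_mul, hσw]
    simp only [smul_mul_assoc, mul_smul_comm, smul_smul]
  have hDbzw2 : Db (z * (w * w)) = (Q ^ 2 + 1) • (z * (z * w)) + (Q - Q ^ 2) • z := by
    rw [hDb z (w * w), hDbz, zero_mul, zero_add, hDbw2]
    simp only [mul_add, mul_smul_comm, mul_one]
  have hσzw : σ (z * w) = z * w := by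
    rw [map_mul, hσz, hσw]
    simp only [smul_mul_assoc, mul_smul_comm, smul_smul]
    rw [inv_mul_cancel₀ hQ0, one_smul]
  have hDz2w : D (z * (z * w)) = (Q + Q⁻¹) • (z * (w * w)) + (1 - Q) • w := by
    rw [hD z (z * w), hDz, hσzw, hDzw, mul_smul_comm, hwzr w]
    module
  have hDbz2w : Db (z * (z * w)) = Q • (z * (z * z)) := by
    rw [hDb z (z * w), hDbz, zero_mul, zero_add, hDbzw, mul_smul_comm]
  have hDz3 : D (z * (z * z)) = (Q ^ 4 + Q ^ 2 + 1) • (z * (z * w)) + (Q - Q ^ 4) • z := by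
    rw [hD z (z * z), hDz, hDz2, map_mul, hσz]
    simp only [smul_mul_assoc, mul_smul_comm, smul_smul, mul_add, mul_one, smul_add]
    rw [hwzr z, hwz]
    simp only [mul_add, mul_smul_comm, mul_one, smul_add, smul_smul]
    module
  have hDbz3 : Db (z * (z * z)) = 0 := by
    rw [hDb z (z * z), hDbz, zero_mul, zero_add, hDbz2, mul_zero]
  -- Ω-level commutation lemmas
  have hcωz0 : ω * ι z = Q • (ι z * ω) := by
    rw [hωcomm z, hσz, map_smul, smul_mul_assoc]
  have hcωw0 : ω * ι w = Q⁻¹ • (ι w * ω) := by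
    rw [hωcomm w, hσw, map_smul, smul_mul_assoc]
  have hcbz0 : ωb * ι z = Q • (ι z * ωb) := by
    rw [hωbcomm z, hσz, map_smul, smul_mul_assoc]
  have hcbw0 : ωb * ι w = Q⁻¹ • (ι w * ωb) := by
    rw [hωbcomm w, hσw, map_smul, smul_mul_assoc]
  have hcωz : ∀ η : Ω, ω * (ι z * η) = Q • (ι z * (ω * η)) := by
    intro η; rw [← mul_assoc, hcωz0, smul_mul_assoc, mul_assoc]
  have hcωw : ∀ η : Ω, ω * (ι w * η) = Q⁻¹ • (ι w * (ω * η)) := by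
    intro η; rw [← mul_assoc, hcωw0, smul_mul_assoc, mul_assoc]
  have hcbz : ∀ η : Ω, ωb * (ι z * η) = Q • (ι z * (ωb * η)) := by
    intro η; rw [← mul_assoc, hcbz0, smul_mul_assoc, mul_assoc]
  have hcbw : ∀ η : Ω, ωb * (ι w * η) = Q⁻¹ • (ι w * (ωb * η)) := by
    intro η; rw [← mul_assoc, hcbw0, smul_mul_assoc, mul_assoc]
  have hιwz0 : ι w * ι z = Q • (ι z * ι w) + (1 - Q) • (1 : Ω) := by
    have := congrArg ι hwz
    simpa only [map_mul, map_add, map_smul, map_one] using this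
  have hιwzr : ∀ η : Ω, ι w * (ι z * η) = Q • (ι z * (ι w * η)) + (1 - Q) • η := by
    intro η
    rw [← mul_assoc, hιwz0, add_mul, smul_mul_assoc, smul_mul_assoc, one_mul, mul_assoc]
  have L0 : ∀ (a : A) (η : Ω), d (ι a * η) = d (ι a) * η + ι a * d η := by
    intro a η
    simpa using hLeib (hι0 a) η
  -- master equation 1 : d(d(ι z)) = 0
  have hEz := hdd (ι z)
  simp only [L0, hda, map_add, map_smul, map_mul, map_zero, map_one, hDz, hDw, hDbz, hDbw,
    hD1, hDb1, hDz2, hDbz2, hDzw, hDbzw, hDw2, hDbw2, hDzw2, hDbzw2, hDz2w, hDbz2w, hDz3,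
    hDbz3, hcωz, hcωw, hcbz, hcbw, hcωz0, hcωw0, hcbz0, hcbw0, hιwzr, hιwz0,
    smul_add, smul_smul, smul_zero, zero_smul, one_smul, neg_smul, smul_neg, mul_add, add_mul,
    mul_smul_comm, smul_mul_assoc, mul_assoc, mul_one, one_mul, mul_zero, zero_mul, add_zero,
    zero_add, mul_neg, neg_mul] at hEz
  have e1 : ι w * d ω = (-Q) • (ι z * (ωb * ω)) := by
    refine lc1 1 hEz ?_
    match_scalars <;> field_simp [hQ0, h1Q, hQ21, hq', hq41] <;> (try tauto) <;> (try ring1) <;> (try (left; ring1)) <;> (try (right; ring1)) <;> (try (rw [eq_div_iff (by simp [hQ0, hQ21, h1Q, hq', hq41, mul_ne_zero])]; ring1)) <;> (try (rw [div_eq_iff (by simp [hQ0, hQ21, h1Q, hq', hq41, mul_ne_zero])]; ring1))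
  -- master equation 2 : d(d(ι w)) = 0
  have hEw := hdd (ι w)
  simp only [L0, hda, map_add, map_smul, map_mul, map_zero, map_one, hDz, hDw, hDbz, hDbw,
    hD1, hDb1, hDz2, hDbz2, hDzw, hDbzw, hDw2, hDbw2, hDzw2, hDbzw2, hDz2w, hDbz2w, hDz3,
    hDbz3, hcωz, hcωw, hcbz, hcbw, hcωz0, hcωw0, hcbz0, hcbw0, hιwzr, hιwz0,
    smul_add, smul_smul, smul_zero, zero_smul, one_smul, neg_smul, smul_neg, mul_add, add_mul,
    mul_smul_comm, smul_mul_assoc, mul_assoc, mul_one, one_mul, mul_zero, zero_mul, add_zero,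
    zero_add, mul_neg, neg_mul] at hEw
  have e2 : ι z * d ωb = (-1 : ℂ) • (ι w * (ω * ωb)) := by
    refine lc1 Q⁻¹ hEw ?_
    match_scalars <;> field_simp [hQ0, h1Q, hQ21, hq', hq41] <;> (try tauto) <;> (try ring1) <;> (try (left; ring1)) <;> (try (right; ring1)) <;> (try (rw [eq_div_iff (by simp [hQ0, hQ21, h1Q, hq', hq41, mul_ne_zero])]; ring1)) <;> (try (rw [div_eq_iff (by simp [hQ0, hQ21, h1Q, hq', hq41, mul_ne_zero])]; ring1))
  -- master equation 3 : d(d(ι (z*z))) = 0  gives the formula for d ω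
  have hEz2 := hdd (ι (z * z))
  simp only [L0, hda, map_add, map_smul, map_mul, map_zero, map_one, hDz, hDw, hDbz, hDbw,
    hD1, hDb1, hDz2, hDbz2, hDzw, hDbzw, hDw2, hDbw2, hDzw2, hDbzw2, hDz2w, hDbz2w, hDz3,
    hDbz3, hcωz, hcωw, hcbz, hcbw, hcωz0, hcωw0, hcbz0, hcbw0, hιwzr, hιwz0,
    smul_add, smul_smul, smul_zero, zero_smul, one_smul, neg_smul, smul_neg, mul_add, add_mul,
    mul_smul_comm, smul_mul_assoc, mul_assoc, mul_one, one_mul, mul_zero, zero_mul, add_zero,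
    zero_add, mul_neg, neg_mul] at hEz2
  simp only [e1, L0, hda, map_add, map_smul, map_mul, map_zero, map_one, hDz, hDw, hDbz, hDbw,
    hD1, hDb1, hDz2, hDbz2, hDzw, hDbzw, hDw2, hDbw2, hDzw2, hDbzw2, hDz2w, hDbz2w, hDz3,
    hDbz3, hcωz, hcωw, hcbz, hcbw, hcωz0, hcωw0, hcbz0, hcbw0, hιwzr, hιwz0,
    smul_add, smul_smul, smul_zero, zero_smul, one_smul, neg_smul, smul_neg, mul_add, add_mul,
    mul_smul_comm, smul_mul_assoc, mul_assoc, mul_one, one_mul, mul_zero, zero_mul, add_zero,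
    zero_add, mul_neg, neg_mul] at hEz2
  have e3 : d ω = (-((Q ^ 2 + 1) / (Q ^ 2 * (1 - Q)))) • (ι w * (ι w * (ω * ω))) := by
    refine lc1 (Q * (1 - Q))⁻¹ hEz2 ?_
    match_scalars <;> field_simp [hQ0, h1Q, hQ21, hq', hq41] <;> (try tauto) <;> (try ring1) <;> (try (left; ring1)) <;> (try (right; ring1)) <;> (try (rw [eq_div_iff (by simp [hQ0, hQ21, h1Q, hq', hq41, mul_ne_zero])]; ring1)) <;> (try (rw [div_eq_iff (by simp [hQ0, hQ21, h1Q, hq', hq41, mul_ne_zero])]; ring1))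
  have e3W : ι w * d ω =
      (-((Q ^ 2 + 1) / (Q ^ 2 * (1 - Q)))) • (ι w * (ι w * (ι w * (ω * ω)))) := by
    have h := congrArg (fun t => ι w * t) e3
    simpa only [mul_smul_comm] using h
  have e4 : ι w * (ι w * (ι w * (ω * ω))) =
      (Q ^ 3 * (1 - Q) / (Q ^ 2 + 1)) • (ι z * (ωb * ω)) := by
    refine lc2 (Q ^ 2 * (1 - Q) / (Q ^ 2 + 1)) (-(Q ^ 2 * (1 - Q) / (Q ^ 2 + 1))) e3W e1 ?_
    match_scalars <;> field_simp [hQ0, h1Q, hQ21, hq', hq41] <;> (try tauto) <;> (try ring1) <;> (try (left; ring1)) <;> (try (right; ring1)) <;> (try (rw [eq_div_iff (by simp [hQ0, hQ21, h1Q, hq', hq41, mul_ne_zero])]; ring1)) <;> (try (rw [div_eq_iff (by simp [hQ0, hQ21, h1Q, hq', hq41, mul_ne_zero])]; ring1))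
  -- master equation 4 : d(d(ι (z*w))) = 0
  have hEzw := hdd (ι (z * w))
  simp only [L0, hda, map_add, map_smul, map_mul, map_zero, map_one, hDz, hDw, hDbz, hDbw,
    hD1, hDb1, hDz2, hDbz2, hDzw, hDbzw, hDw2, hDbw2, hDzw2, hDbzw2, hDz2w, hDbz2w, hDz3,
    hDbz3, hcωz, hcωw, hcbz, hcbw, hcωz0, hcωw0, hcbz0, hcbw0, hιwzr, hιwz0,
    smul_add, smul_smul, smul_zero, zero_smul, one_smul, neg_smul, smul_neg, mul_add, add_mul,
    mul_smul_comm, smul_mul_assoc, mul_assoc, mul_one, one_mul, mul_zero, zero_mul, add_zero,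
    zero_add, mul_neg, neg_mul] at hEzw
  simp only [e1, e2, L0, hda, map_add, map_smul, map_mul, map_zero, map_one, hDz, hDw, hDbz, hDbw,
    hD1, hDb1, hDz2, hDbz2, hDzw, hDbzw, hDw2, hDbw2, hDzw2, hDbzw2, hDz2w, hDbz2w, hDz3,
    hDbz3, hcωz, hcωw, hcbz, hcbw, hcωz0, hcωw0, hcbz0, hcbw0, hιwzr, hιwz0,
    smul_add, smul_smul, smul_zero, zero_smul, one_smul, neg_smul, smul_neg, mul_add, add_mul,
    mul_smul_comm, smul_mul_assoc, mul_assoc, mul_one, one_mul, mul_zero, zero_mul, add_zero,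
    zero_add, mul_neg, neg_mul] at hEzw
  have hR : ι z * (ι w * (ωb * ω)) + (Q ^ 4) • (ι z * (ι w * (ω * ωb)))
      + (Q ^ 3 * (1 - Q)) • (ω * ωb) = 0 := by
    refine lc1 Q hEzw ?_
    match_scalars <;> field_simp [hQ0, h1Q, hQ21, hq', hq41] <;> (try tauto) <;> (try ring1) <;> (try (left; ring1)) <;> (try (right; ring1)) <;> (try (rw [eq_div_iff (by simp [hQ0, hQ21, h1Q, hq', hq41, mul_ne_zero])]; ring1)) <;> (try (rw [div_eq_iff (by simp [hQ0, hQ21, h1Q, hq', hq41, mul_ne_zero])]; ring1))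
  have hRz : ι z * (ι z * (ι w * (ωb * ω)))
      + (Q ^ 4) • (ι z * (ι z * (ι w * (ω * ωb))))
      + (Q ^ 3 * (1 - Q)) • (ι z * (ω * ωb)) = 0 := by
    have h := congrArg (fun t => ι z * t) hR
    simp only [mul_add, mul_smul_comm, mul_zero] at h
    refine lc1 1 h ?_
    match_scalars <;> field_simp [hQ0, h1Q, hQ21, hq', hq41] <;> (try tauto) <;> (try ring1) <;> (try (left; ring1)) <;> (try (right; ring1)) <;> (try (rw [eq_div_iff (by simp [hQ0, hQ21, h1Q, hq', hq41, mul_ne_zero])]; ring1)) <;> (try (rw [div_eq_iff (by simp [hQ0, hQ21, h1Q, hq', hq41, mul_ne_zero])]; ring1))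
  -- master equation 5 : d(d(ι (z*(z*w)))) = 0
  have hEz2w := hdd (ι (z * (z * w)))
  simp only [L0, hda, map_add, map_smul, map_mul, map_zero, map_one, hDz, hDw, hDbz, hDbw,
    hD1, hDb1, hDz2, hDbz2, hDzw, hDbzw, hDw2, hDbw2, hDzw2, hDbzw2, hDz2w, hDbz2w, hDz3,
    hDbz3, hcωz, hcωw, hcbz, hcbw, hcωz0, hcωw0, hcbz0, hcbw0, hιwzr, hιwz0,
    smul_add, smul_smul, smul_zero, zero_smul, one_smul, neg_smul, smul_neg, mul_add, add_mul,
    mul_smul_comm, smul_mul_assoc, mul_assoc, mul_one, one_mul, mul_zero, zero_mul, add_zero,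
    zero_add, mul_neg, neg_mul] at hEz2w
  simp only [e1, e2, e4, L0, hda, map_add, map_smul, map_mul, map_zero, map_one, hDz, hDw, hDbz, hDbw,
    hD1, hDb1, hDz2, hDbz2, hDzw, hDbzw, hDw2, hDbw2, hDzw2, hDbzw2, hDz2w, hDbz2w, hDz3,
    hDbz3, hcωz, hcωw, hcbz, hcbw, hcωz0, hcωw0, hcbz0, hcbw0, hιwzr, hιwz0,
    smul_add, smul_smul, smul_zero, zero_smul, one_smul, neg_smul, smul_neg, mul_add, add_mul,
    mul_smul_comm, smul_mul_assoc, mul_assoc, mul_one, one_mul, mul_zero, zero_mul, add_zero,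
    zero_add, mul_neg, neg_mul] at hEz2w
  have hR2 : ((Q ^ 2 + 1) / Q) • (ι z * (ι z * (ι w * (ωb * ω))))
      + (1 - Q) • (ι z * (ωb * ω))
      + (Q ^ 3 * (Q ^ 2 + 1)) • (ι z * (ι z * (ι w * (ω * ωb))))
      + (Q ^ 2 - Q ^ 5) • (ι z * (ω * ωb)) = 0 := by
    refine lc1 1 hEz2w ?_
    match_scalars <;> field_simp [hQ0, h1Q, hQ21, hq', hq41] <;> (try tauto) <;> (try ring1) <;> (try (left; ring1)) <;> (try (right; ring1)) <;> (try (rw [eq_div_iff (by simp [hQ0, hQ21, h1Q, hq', hq41, mul_ne_zero])]; ring1)) <;> (try (rw [div_eq_iff (by simp [hQ0, hQ21, h1Q, hq', hq41, mul_ne_zero])]; ring1))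
  have hS : ι z * (ωb * ω) = (-(Q ^ 3)) • (ι z * (ω * ωb)) := by
    refine lc2 (1 - Q)⁻¹ (-((Q ^ 2 + 1) / (Q * (1 - Q)))) hR2 hRz ?_
    match_scalars <;> field_simp [hQ0, h1Q, hQ21, hq', hq41] <;> (try tauto) <;> (try ring1) <;> (try (left; ring1)) <;> (try (right; ring1)) <;> (try (rw [eq_div_iff (by simp [hQ0, hQ21, h1Q, hq', hq41, mul_ne_zero])]; ring1)) <;> (try (rw [div_eq_iff (by simp [hQ0, hQ21, h1Q, hq', hq41, mul_ne_zero])]; ring1))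
  -- final assembly
  calc ι (w ^ 3) * ω ^ 2 = ι w * (ι w * (ι w * (ω * ω))) := by
        rw [show (w : A) ^ 3 = w * (w * w) from by rw [pow_succ, pow_two]; exact mul_assoc w w w,
          pow_two]
        simp only [map_mul, mul_assoc]
  _ = (-((q : ℂ) ^ 8 / ((q : ℂ) ^ 4 + 1))) • (ι z * (ωb * ω + ((q : ℂ) ^ 4) • (ω * ωb))) := by
        simp only [mul_add, mul_smul_comm, smul_add, smul_smul]
        refine lc2 1 (Q ^ 3 / (Q ^ 2 + 1)) e4 hS ?_
        match_scalars <;> (try simp only [hQdef]) <;> field_simp [hQ0, h1Q, hQ21, hq', hq41] <;> (try tauto) <;> (try ring1) <;> (try (left; ring1)) <;> (try (right; ring1)) <;> (try (rw [eq_div_iff (by simp [hQ0, hQ21, h1Q, hq', hq41, mul_ne_zero])]; ring1)) <;> (try (rw [div_eq_iff (by simp [hQ0, hQ21, h1Q, hq', hq41, mul_ne_zero])]; ring1))
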